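/- There is an absolute constant C > 0 such that for every smooth Y : ℝ × ℝ³ → ℝ³, every t ≥ 0 and every y ∈ ℝ³ with r = |y| > 0: |(t − r) ∂_t ∂_r Y| ≤ C ( |∂Y| + Σ_Z |∂ Z Y| + t |(∂_t² − Δ)Y| ) at the point (t,y), where ∂_r = (y/r)·∇ and the sum runs over Z ∈ {∂_t, ∂₁, ∂₂, Ω̃₁, Ω̃₂, Ω̃₃, S̃}. -/

import Mathlib

/-!
STATEMENT 15: Pointwise estimate (C-10):
|(t − r)∂_t∂_r Y| ≤ C ( |∂Y| + Σ_Z |∂ Z Y| + t |(∂_t² − Δ)Y| ),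
where ∂_r = (y/r)·∇ and Z ranges over {∂_t, ∂₁, ∂₂, Ω̃₁, Ω̃₂, Ω̃₃, S̃}.
-/

noncomputable section

namespace Stmt15

abbrev Pt : Type := EuclideanSpace ℝ (Fin 3)

/-- Scalar space-time functions. -/
abbrev STF : Type := ℝ → Pt → ℝ

/-- ℝ³-valued space-time functions. -/
abbrev STV : Type := ℝ → Pt → Fin 3 → ℝ

def pd (j : Fin 3) (f : Pt → ℝ) : Pt → ℝ :=
  fun x => fderiv ℝ f x (EuclideanSpace.single j 1)

/-- Time derivative ∂_t. -/
def Dt (f : STF) : STF := fun t x => deriv (fun s => f s x) t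

/-- Spatial derivative ∂_j. -/
def Dsp (j : Fin 3) (f : STF) : STF := fun t x => pd j (f t) x

/-- All space-time first derivatives ∂ = (∂_t, ∂₁, ∂₂, ∂₃). -/
def Dst : Fin 4 → STF → STF := ![Dt, Dsp 0, Dsp 1, Dsp 2]

/-- The wave operator ∂_t² − Δ. -/
def Box (f : STF) : STF := fun t x => Dt (Dt f) t x - ∑ j, Dsp j (Dsp j f) t x

/-- The rotation operators Ω = y ∧ ∇ : Ωᵢ = y_{i+1}∂_{i+2} − y_{i+2}∂_{i+1} (cyclic). -/
def Om (i : Fin 3) (f : STF) : STF :=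
  fun t x => x (i+1) * Dsp (i+2) f t x - x (i+2) * Dsp (i+1) f t x

/-- The scaling operator S = t∂_t + r∂_r = t∂_t + Σ_j y_j ∂_j. -/
def Sc (f : STF) : STF := fun t x => t * Dt f t x + ∑ j, x j * Dsp j f t x

/-- The matrices U₁, U₂, U₃. -/
def Umat : Fin 3 → Matrix (Fin 3) (Fin 3) ℝ :=
  ![!![0,0,0; 0,0,1; 0,-1,0], !![0,0,-1; 0,0,0; 1,0,0], !![0,1,0; -1,0,0; 0,0,0]]

/-- Componentwise application of a scalar operator to a vector field. -/
def mapc (T : STF → STF) (Y : STV) : STV := fun t x i => T (fun s y => Y s y i) t x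

/-- The modified rotations Ω̃ᵢY = ΩᵢY + UᵢY. -/
def OmT (i : Fin 3) (Y : STV) : STV :=
  fun t x j => Om i (fun s y => Y s y j) t x + ∑ k, Umat i j k * Y t x k

/-- The modified scaling S̃Y = (S − 1)Y. -/
def ScT (Y : STV) : STV := fun t x j => Sc (fun s y => Y s y j) t x - Y t x j

/-- The seven generators {∂_t, ∂₁, ∂₂, Ω̃₁, Ω̃₂, Ω̃₃, S̃} acting on vector fields. -/
def Gen : Fin 7 → STV → STV :=
  ![mapc Dt, mapc (Dsp 0), mapc (Dsp 1), OmT 0, OmT 1, OmT 2, ScT]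

/-- The radial derivative ∂_r = (y/r)·∇ on space-time functions. -/
def DrT (f : STF) : STF := fun t x => ∑ j, (x j / ‖x‖) * Dsp j f t x

/-- |∂W| : norm of the array of all first-order space-time derivatives of W. -/
def d1Norm (W : STV) (t : ℝ) (x : Pt) : ℝ :=
  Real.sqrt (∑ b : Fin 4, ∑ i, (Dst b (fun s y => W s y i) t x)^2)

abbrev Q : Type := ℝ × Pt
def e0 : Q := (1, 0)
def ee (j : Fin 3) : Q := (0, EuclideanSpace.single j 1)
def cur (h : Q → ℝ) : STF := fun s y => h (s, y)
def Dv (v : Q) (h : Q → ℝ) : Q → ℝ := fun q => fderiv ℝ h q v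

lemma diffAt {h : Q → ℝ} (hh : ContDiff ℝ (⊤:ℕ∞) h) (q : Q) : DifferentiableAt ℝ h q :=
  (hh.differentiable (by simp)).differentiableAt

lemma contDiff_Dv {h : Q → ℝ} (hh : ContDiff ℝ (⊤:ℕ∞) h) (v : Q) :
    ContDiff ℝ (⊤:ℕ∞) (Dv v h) :=
  ((hh.fderiv_right (by exact_mod_cast le_top)).clm_apply contDiff_const)

lemma hasDerivAt_slice {h : Q → ℝ} (hh : ContDiff ℝ (⊤:ℕ∞) h) (t : ℝ) (x : Pt) :
    HasDerivAt (fun s => h (s, x)) (fderiv ℝ h (t, x) e0) t := by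
  have h1 : HasDerivAt (fun s : ℝ => ((s : ℝ), x)) ((1:ℝ), (0:Pt)) t :=
    (hasDerivAt_id t).prodMk (hasDerivAt_const t x)
  have h2 := ((diffAt hh (t,x)).hasFDerivAt).comp_hasDerivAt t h1
  exact h2

lemma Dt_cur {h : Q → ℝ} (hh : ContDiff ℝ (⊤:ℕ∞) h) : Dt (cur h) = cur (Dv e0 h) := by
  funext t x
  exact (hasDerivAt_slice hh t x).deriv

lemma Dsp_cur {h : Q → ℝ} (hh : ContDiff ℝ (⊤:ℕ∞) h) (j : Fin 3) :
    Dsp j (cur h) = cur (Dv (ee j) h) := by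
  funext t x
  have h1 : HasFDerivAt (fun y : Pt => ((t : ℝ), y))
      ((0 : Pt →L[ℝ] ℝ).prod (ContinuousLinearMap.id ℝ Pt)) x :=
    (hasFDerivAt_const t x).prodMk (hasFDerivAt_id x)
  have h2 : HasFDerivAt (fun y : Pt => h (t, y))
      ((fderiv ℝ h (t,x)).comp ((0 : Pt →L[ℝ] ℝ).prod (ContinuousLinearMap.id ℝ Pt))) x :=
    ((diffAt hh (t,x)).hasFDerivAt).comp x h1
  show fderiv ℝ (fun y : Pt => h (t, y)) x (EuclideanSpace.single j 1) = _
  rw [h2.fderiv]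
  show fderiv ℝ h (t,x) ((0 : Pt →L[ℝ] ℝ) (EuclideanSpace.single j 1),
    (ContinuousLinearMap.id ℝ Pt) (EuclideanSpace.single j 1)) = _
  simp [ee, Dv, cur]

lemma Dv_symm {h : Q → ℝ} (hh : ContDiff ℝ (⊤:ℕ∞) h) (q v w : Q) :
    fderiv ℝ (Dv v h) q w = fderiv ℝ (Dv w h) q v := by
  have hdc : DifferentiableAt ℝ (fderiv ℝ h) q :=
    ((hh.fderiv_right (m := (⊤:ℕ∞)) (by exact_mod_cast le_top)).differentiable
      (by simp)).differentiableAt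
  have key : ∀ u : Q, fderiv ℝ (Dv u h) q = (fderiv ℝ (fderiv ℝ h) q).flip u := by
    intro u
    have h1 : Dv u h = fun p => (fderiv ℝ h p) ((fun _ : Q => u) p) := rfl
    rw [h1, fderiv_clm_apply hdc (differentiableAt_const u)]
    simp [fderiv_const]
  rw [key v, key w]
  have hsymm := second_derivative_symmetric
    (fun p => (diffAt hh p).hasFDerivAt) hdc.hasFDerivAt v w
  simpa using hsymm.symm

def coordC (j : Fin 3) : Q →L[ℝ] ℝ :=
  (EuclideanSpace.proj j).comp (ContinuousLinearMap.snd ℝ ℝ Pt)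

lemma coordC_apply (j : Fin 3) (v : Q) : coordC j v = v.2 j := by
  simp [coordC]

lemma hasF_coord (j : Fin 3) (q : Q) :
    HasFDerivAt (fun p : Q => p.2 j) (coordC j) q := by
  have h1 := (coordC j).hasFDerivAt (x := q)
  have h2 : (⇑(coordC j)) = fun p : Q => p.2 j := by
    funext p; simp [coordC]
  rwa [h2] at h1

-- directional derivative helpers for products/sums
def Sh (h : Q → ℝ) : Q → ℝ :=
  fun p => p.1 * Dv e0 h p + ∑ j, p.2 j * Dv (ee j) h p - h p

def Oh (k : Fin 3) (h : Q → ℝ) : Q → ℝ :=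
  fun p => p.2 (k+1) * Dv (ee (k+2)) h p - p.2 (k+2) * Dv (ee (k+1)) h p

lemma contDiff_coord (j : Fin 3) : ContDiff ℝ (⊤:ℕ∞) (fun p : Q => p.2 j) := by
  have := (coordC j).contDiff (n := (⊤:ℕ∞))
  have h2 : (⇑(coordC j)) = fun p : Q => p.2 j := by funext p; simp [coordC]
  rwa [h2] at this

lemma contDiff_Sh {h : Q → ℝ} (hh : ContDiff ℝ (⊤:ℕ∞) h) : ContDiff ℝ (⊤:ℕ∞) (Sh h) := by
  refine ContDiff.sub (ContDiff.add (contDiff_fst.mul (contDiff_Dv hh e0)) ?_) hh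
  exact ContDiff.sum fun j _ => (contDiff_coord j).mul (contDiff_Dv hh (ee j))

lemma contDiff_Oh {h : Q → ℝ} (hh : ContDiff ℝ (⊤:ℕ∞) h) (k : Fin 3) :
    ContDiff ℝ (⊤:ℕ∞) (Oh k h) :=
  ((contDiff_coord (k+1)).mul (contDiff_Dv hh (ee (k+2)))).sub
    ((contDiff_coord (k+2)).mul (contDiff_Dv hh (ee (k+1))))

lemma fderiv_Sh {h : Q → ℝ} (hh : ContDiff ℝ (⊤:ℕ∞) h) (q v : Q) :
    fderiv ℝ (Sh h) q v =
      v.1 * Dv e0 h q + q.1 * fderiv ℝ (Dv e0 h) q v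
        + (∑ j, (v.2 j * Dv (ee j) h q + q.2 j * fderiv ℝ (Dv (ee j) h) q v))
        - fderiv ℝ h q v := by
  have hD : ∀ u : Q, DifferentiableAt ℝ (Dv u h) q :=
    fun u => diffAt (contDiff_Dv hh u) q
  have h0 : HasFDerivAt (fun p : Q => p.1 * Dv e0 h p)
      ((fun p : Q => p.1) q • fderiv ℝ (Dv e0 h) q + (Dv e0 h q) • ContinuousLinearMap.fst ℝ ℝ Pt) q :=
    hasFDerivAt_fst.mul (hD e0).hasFDerivAt
  have hj : ∀ j : Fin 3, HasFDerivAt (fun p : Q => p.2 j * Dv (ee j) h p)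
      ((fun p : Q => p.2 j) q • fderiv ℝ (Dv (ee j) h) q + (Dv (ee j) h q) • coordC j) q :=
    fun j => (hasF_coord j q).mul (hD (ee j)).hasFDerivAt
  have hsum : HasFDerivAt (fun p : Q => ∑ j, p.2 j * Dv (ee j) h p)
      (∑ j, ((fun p : Q => p.2 j) q • fderiv ℝ (Dv (ee j) h) q + (Dv (ee j) h q) • coordC j)) q :=
    HasFDerivAt.fun_sum (fun j _ => hj j)
  have hall := (h0.add hsum).sub (diffAt hh q).hasFDerivAt
  have heq : fderiv ℝ (Sh h) q =
      ((fun p : Q => p.1) q • fderiv ℝ (Dv e0 h) q + (Dv e0 h q) • ContinuousLinearMap.fst ℝ ℝ Pt)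
        + (∑ j, ((fun p : Q => p.2 j) q • fderiv ℝ (Dv (ee j) h) q + (Dv (ee j) h q) • coordC j))
        - fderiv ℝ h q := hall.fderiv
  rw [heq]
  simp only [ContinuousLinearMap.sub_apply, ContinuousLinearMap.add_apply,
    ContinuousLinearMap.smul_apply, ContinuousLinearMap.sum_apply, smul_eq_mul,
    ContinuousLinearMap.coe_fst', coordC_apply]
  simp only [Fin.sum_univ_three]
  ring

lemma fderiv_Oh {h : Q → ℝ} (hh : ContDiff ℝ (⊤:ℕ∞) h) (k : Fin 3) (q v : Q) :
    fderiv ℝ (Oh k h) q v =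
      v.2 (k+1) * Dv (ee (k+2)) h q + q.2 (k+1) * fderiv ℝ (Dv (ee (k+2)) h) q v
        - (v.2 (k+2) * Dv (ee (k+1)) h q + q.2 (k+2) * fderiv ℝ (Dv (ee (k+1)) h) q v) := by
  have hD : ∀ u : Q, DifferentiableAt ℝ (Dv u h) q :=
    fun u => diffAt (contDiff_Dv hh u) q
  have h1 : HasFDerivAt (fun p : Q => p.2 (k+1) * Dv (ee (k+2)) h p)
      ((fun p : Q => p.2 (k+1)) q • fderiv ℝ (Dv (ee (k+2)) h) q + (Dv (ee (k+2)) h q) • coordC (k+1)) q :=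
    (hasF_coord (k+1) q).mul (hD (ee (k+2))).hasFDerivAt
  have h2 : HasFDerivAt (fun p : Q => p.2 (k+2) * Dv (ee (k+1)) h p)
      ((fun p : Q => p.2 (k+2)) q • fderiv ℝ (Dv (ee (k+1)) h) q + (Dv (ee (k+1)) h q) • coordC (k+2)) q :=
    (hasF_coord (k+2) q).mul (hD (ee (k+1))).hasFDerivAt
  have heq := (h1.sub h2).fderiv
  rw [show fderiv ℝ (Oh k h) q = _ from heq]
  simp only [ContinuousLinearMap.sub_apply, ContinuousLinearMap.add_apply,
    ContinuousLinearMap.smul_apply, smul_eq_mul, coordC_apply]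
  ring


-- conversions of statement operators
lemma Dt_DrT {h : Q → ℝ} (hh : ContDiff ℝ (⊤:ℕ∞) h) (t : ℝ) (x : Pt) :
    Dt (DrT (cur h)) t x = ∑ j, (x j / ‖x‖) * fderiv ℝ (Dv (ee j) h) (t, x) e0 := by
  have hD : (fun s => DrT (cur h) s x)
      = fun s => ∑ j, (x j / ‖x‖) * Dv (ee j) h (s, x) := by
    funext s
    unfold DrT
    simp only [Dsp_cur hh]
    rfl
  have h2 : Dt (DrT (cur h)) t x
      = deriv (fun s => ∑ j, (x j / ‖x‖) * Dv (ee j) h (s, x)) t := by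
    unfold Dt; rw [hD]
  rw [h2]
  exact (HasDerivAt.fun_sum (fun j _ =>
    (hasDerivAt_slice (contDiff_Dv hh (ee j)) t x).const_mul ((x j / ‖x‖)))).deriv

lemma Box_cur {h : Q → ℝ} (hh : ContDiff ℝ (⊤:ℕ∞) h) (t : ℝ) (x : Pt) :
    Box (cur h) t x = fderiv ℝ (Dv e0 h) (t,x) e0
      - ∑ j, fderiv ℝ (Dv (ee j) h) (t,x) (ee j) := by
  unfold Box
  rw [Dt_cur hh, Dt_cur (contDiff_Dv hh e0)]
  congr 1
  refine Finset.sum_congr rfl (fun j _ => ?_)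
  rw [Dsp_cur hh j, Dsp_cur (contDiff_Dv hh (ee j)) j]
  rfl

section YY
variable (Y : STV)

def HY (i : Fin 3) : Q → ℝ := fun p => Y p.1 p.2 i

variable (hY : ∀ i, ContDiff ℝ (⊤:ℕ∞) fun q : ℝ × Pt => Y q.1 q.2 i)
include hY

lemma hHY (i : Fin 3) : ContDiff ℝ (⊤:ℕ∞) (HY Y i) := hY i

lemma ScT_comp (i : Fin 3) : (fun s y => ScT Y s y i) = cur (Sh (HY Y i)) := by
  funext s y
  show Sc (fun s y => Y s y i) s y - Y s y i = _
  unfold Sc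
  rw [show (fun s y => Y s y i) = cur (HY Y i) from rfl, Dt_cur (hHY Y hY i)]
  simp only [Dsp_cur (hHY Y hY i)]
  rfl

lemma OmT_comp (k i : Fin 3) :
    (fun s y => OmT k Y s y i)
      = cur (fun p => Oh k (HY Y i) p + ∑ m, Umat k i m * HY Y m p) := by
  funext s y
  show Om k (fun s y => Y s y i) s y + ∑ m, Umat k i m * Y s y m = _
  unfold Om
  rw [show (fun s y => Y s y i) = cur (HY Y i) from rfl]
  simp only [Dsp_cur (hHY Y hY i)]
  rfl

lemma Dsp_ScT (i : Fin 3) (t : ℝ) (x : Pt) (j : Fin 3) :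
    Dsp j (fun s y => ScT Y s y i) t x = fderiv ℝ (Sh (HY Y i)) (t, x) (ee j) := by
  rw [ScT_comp Y hY i, Dsp_cur (contDiff_Sh (hHY Y hY i)) j]
  rfl

lemma Dt_ScT (i : Fin 3) (t : ℝ) (x : Pt) :
    Dt (fun s y => ScT Y s y i) t x = fderiv ℝ (Sh (HY Y i)) (t, x) e0 := by
  rw [ScT_comp Y hY i, Dt_cur (contDiff_Sh (hHY Y hY i))]
  rfl

lemma Dsp_Y (i : Fin 3) (t : ℝ) (x : Pt) (j : Fin 3) :
    Dsp j (fun s y => Y s y i) t x = fderiv ℝ (HY Y i) (t, x) (ee j) := by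
  rw [show (fun s y => Y s y i) = cur (HY Y i) from rfl, Dsp_cur (hHY Y hY i) j]
  rfl

lemma Dsp_OmT (k i : Fin 3) (t : ℝ) (x : Pt) (j : Fin 3) :
    Dsp j (fun s y => OmT k Y s y i) t x
      = fderiv ℝ (Oh k (HY Y i)) (t, x) (ee j)
        + ∑ m, Umat k i m * fderiv ℝ (HY Y m) (t, x) (ee j) := by
  have hG : ContDiff ℝ (⊤:ℕ∞) (fun p => Oh k (HY Y i) p + ∑ m, Umat k i m * HY Y m p) :=
    (contDiff_Oh (hHY Y hY i) k).add (ContDiff.sum fun m _ => contDiff_const.mul (hHY Y hY m))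
  rw [OmT_comp Y hY k i, Dsp_cur hG j]
  show fderiv ℝ (fun p => Oh k (HY Y i) p + ∑ m, Umat k i m * HY Y m p) (t,x) (ee j) = _
  have h1 : HasFDerivAt (Oh k (HY Y i)) (fderiv ℝ (Oh k (HY Y i)) (t,x)) (t,x) :=
    (diffAt (contDiff_Oh (hHY Y hY i) k) (t,x)).hasFDerivAt
  have hsum : HasFDerivAt (fun p : Q => ∑ m, Umat k i m * HY Y m p)
      (∑ m, Umat k i m • fderiv ℝ (HY Y m) (t,x)) (t,x) :=
    HasFDerivAt.fun_sum fun m _ => ((diffAt (hHY Y hY m) (t,x)).hasFDerivAt).const_mul _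
  have hall := h1.add hsum
  rw [show fderiv ℝ (fun p => Oh k (HY Y i) p + ∑ m, Umat k i m * HY Y m p) (t,x) = _
    from hall.fderiv]
  simp only [ContinuousLinearMap.add_apply, ContinuousLinearMap.sum_apply,
    ContinuousLinearMap.smul_apply, smul_eq_mul]

end YY

-- norm facts
lemma coord_le (x : Pt) (j : Fin 3) : |x j| ≤ ‖x‖ := by
  rw [show |x j| = Real.sqrt ((x j)^2) from (Real.sqrt_sq_eq_abs _).symm,
    EuclideanSpace.norm_eq]
  apply Real.sqrt_le_sqrt
  have := Finset.single_le_sum (f := fun i => ‖x i‖^2)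
    (fun i _ => sq_nonneg _) (Finset.mem_univ j)
  simpa [Real.norm_eq_abs, sq_abs] using this

lemma norm_sq_eq (x : Pt) : ‖x‖^2 = ∑ j, (x j)^2 := by
  rw [EuclideanSpace.norm_eq, Real.sq_sqrt (by positivity)]
  simp [Real.norm_eq_abs, sq_abs]

lemma d1Norm_nonneg (W : STV) (t : ℝ) (x : Pt) : 0 ≤ d1Norm W t x := Real.sqrt_nonneg _

lemma entry_le_d1Norm (W : STV) (t : ℝ) (x : Pt) (b : Fin 4) (i : Fin 3) :
    |Dst b (fun s y => W s y i) t x| ≤ d1Norm W t x := by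
  have h1 : (Dst b (fun s y => W s y i) t x)^2
      ≤ ∑ b' : Fin 4, ∑ i', (Dst b' (fun s y => W s y i') t x)^2 := by
    calc (Dst b (fun s y => W s y i) t x)^2
        ≤ ∑ i', (Dst b (fun s y => W s y i') t x)^2 :=
          Finset.single_le_sum (f := fun i' => (Dst b (fun s y => W s y i') t x)^2)
            (fun _ _ => sq_nonneg _) (Finset.mem_univ i)
      _ ≤ _ := Finset.single_le_sum
          (f := fun b' => ∑ i', (Dst b' (fun s y => W s y i') t x)^2)
          (fun _ _ => Finset.sum_nonneg fun _ _ => sq_nonneg _) (Finset.mem_univ b)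
  calc |Dst b (fun s y => W s y i) t x|
      = Real.sqrt ((Dst b (fun s y => W s y i) t x)^2) := (Real.sqrt_sq_eq_abs _).symm
    _ ≤ d1Norm W t x := Real.sqrt_le_sqrt h1

lemma dsp_le_d1Norm (W : STV) (t : ℝ) (x : Pt) (j : Fin 3) (i : Fin 3) :
    |Dsp j (fun s y => W s y i) t x| ≤ d1Norm W t x := by
  fin_cases j
  · exact entry_le_d1Norm W t x 1 i
  · exact entry_le_d1Norm W t x 2 i
  · exact entry_le_d1Norm W t x 3 i

lemma dt_le_d1Norm (W : STV) (t : ℝ) (x : Pt) (i : Fin 3) :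
    |Dt (fun s y => W s y i) t x| ≤ d1Norm W t x :=
  entry_le_d1Norm W t x 0 i

lemma sqrt_sum3 (f : Fin 3 → ℝ) : Real.sqrt (∑ i, (f i)^2) ≤ |f 0| + |f 1| + |f 2| := by
  have h2 : ∑ i, (f i)^2 ≤ (|f 0| + |f 1| + |f 2|)^2 := by
    rw [Fin.sum_univ_three]
    nlinarith [sq_abs (f 0), sq_abs (f 1), sq_abs (f 2), abs_nonneg (f 0), abs_nonneg (f 1),
      abs_nonneg (f 2), mul_nonneg (abs_nonneg (f 0)) (abs_nonneg (f 1)),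
      mul_nonneg (abs_nonneg (f 0)) (abs_nonneg (f 2)),
      mul_nonneg (abs_nonneg (f 1)) (abs_nonneg (f 2))]
  calc Real.sqrt (∑ i, (f i)^2) ≤ Real.sqrt ((|f 0| + |f 1| + |f 2|)^2) := Real.sqrt_le_sqrt h2
    _ = |f 0| + |f 1| + |f 2| := Real.sqrt_sq (by positivity)

lemma wsum_bound (y : Pt) (c : Fin 3 → ℝ) (K : ℝ) (hc : ∀ j, |c j| ≤ K) :
    |y 0 * c 0 + y 1 * c 1 + y 2 * c 2| ≤ 3 * (‖y‖ * K) := by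
  have hb : ∀ j : Fin 3, |y j * c j| ≤ ‖y‖ * K := fun j => by
    rw [abs_mul]
    exact mul_le_mul (coord_le y j) (hc j) (abs_nonneg _) (norm_nonneg _)
  calc |y 0 * c 0 + y 1 * c 1 + y 2 * c 2|
      ≤ |y 0 * c 0 + y 1 * c 1| + |y 2 * c 2| := abs_add_le _ _
    _ ≤ |y 0 * c 0| + |y 1 * c 1| + |y 2 * c 2| := by linarith [abs_add_le (y 0 * c 0) (y 1 * c 1)]
    _ ≤ 3 * (‖y‖ * K) := by linarith [hb 0, hb 1, hb 2]

lemma umat_le (k i m : Fin 3) : |Umat k i m| ≤ 1 := by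
  fin_cases k <;> fin_cases i <;> fin_cases m <;>
    norm_num [Umat, Matrix.cons_val_zero, Matrix.cons_val_one, Matrix.head_cons,
      Matrix.head_fin_const]



lemma abs5 (a b c d e : ℝ) : |a - b + c + d + e| ≤ |a| + |b| + |c| + |d| + |e| := by
  calc |a - b + c + d + e| ≤ |a - b + c + d| + |e| := abs_add_le _ _
    _ ≤ |a - b + c| + |d| + |e| := by linarith [abs_add_le (a-b+c) d]
    _ ≤ |a - b| + |c| + |d| + |e| := by linarith [abs_add_le (a-b) c]
    _ ≤ |a| + |b| + |c| + |d| + |e| := by linarith [abs_sub a b]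

lemma assemble (r t G M NB A1 A2 A3 A4 A5 : ℝ) (ht : 0 ≤ t) (hr : 0 < r)
    (hG : 0 ≤ G) (hM : 0 ≤ M) (hNB : 0 ≤ NB)
    (e1 : |A1| ≤ t*(3*(r*G))) (e2 : |A2| ≤ r^2*G) (e3 : |A3| ≤ t*r^2*NB)
    (e4 : |A4| ≤ 2*t*(3*(r*M))) (e5 : |A5| ≤ t*(3*(2*(r*(G+3*M))))) :
    |A1 - A2 + A3 + A4 + A5| ≤ (r*(t+r))*(10*G+24*M+t*NB) := by
  have h := abs5 A1 A2 A3 A4 A5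
  nlinarith [mul_nonneg (mul_nonneg ht hr.le) hG, mul_nonneg (mul_nonneg hr.le hr.le) hG,
    mul_nonneg (mul_nonneg hr.le hr.le) hM,
    mul_nonneg (mul_nonneg (mul_nonneg ht ht) hr.le) hNB]

lemma alg_id (t x0 x1 x2 a00 a0 a1 a2 m00 m01 m02 m11 m12 m22 p0 p1 p2 : ℝ) :
    (t^2 - (x0^2+x1^2+x2^2)) * (x0*a0 + x1*a1 + x2*a2)
      = t * (x0 * (t*a0 + (x0*m00 + x1*m01 + x2*m02))
           + x1 * (t*a1 + (x0*m01 + x1*m11 + x2*m12))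
           + x2 * (t*a2 + (x0*m02 + x1*m12 + x2*m22)))
        - (x0^2+x1^2+x2^2) * (t*a00 + (x0*a0 + x1*a1 + x2*a2))
        + t * (x0^2+x1^2+x2^2) * (a00 - (m00+m11+m22))
        + 2*t*(x0*p0 + x1*p1 + x2*p2)
        + t * ( (x1*(x1*m22 - p1 - x2*m12) - x2*(p2 + x1*m12 - x2*m11))
              + (x2*(x2*m00 - p2 - x0*m02) - x0*(p0 + x2*m02 - x0*m22))
              + (x0*(x0*m11 - p0 - x1*m01) - x1*(p1 + x0*m01 - x1*m00)) ) := by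
  ring

lemma key (Y : STV) (hY : ∀ i, ContDiff ℝ (⊤:ℕ∞) fun q : ℝ × Pt => Y q.1 q.2 i)
    (t : ℝ) (y : Pt) (ht : 0 ≤ t) (hr : 0 < ‖y‖) (i : Fin 3) :
    |t - ‖y‖| * |Dt (DrT fun s z => Y s z i) t y| ≤
      10 * (∑ z : Fin 7, d1Norm (Gen z Y) t y) + 24 * d1Norm Y t y
        + t * Real.sqrt (∑ i', (Box (fun s z => Y s z i') t y)^2) := by
  obtain ⟨G, hGdef⟩ : ∃ G, G = ∑ z : Fin 7, d1Norm (Gen z Y) t y := ⟨_, rfl⟩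
  obtain ⟨M, hMdef⟩ : ∃ M, M = d1Norm Y t y := ⟨_, rfl⟩
  obtain ⟨NB, hNBdef⟩ : ∃ NB, NB = Real.sqrt (∑ i', (Box (fun s z => Y s z i') t y)^2) := ⟨_, rfl⟩
  rw [← hGdef, ← hMdef, ← hNBdef]
  have hcd : ContDiff ℝ (⊤:ℕ∞) (HY Y i) := hHY Y hY i
  -- nonnegativity
  have hM0 : 0 ≤ M := hMdef ▸ d1Norm_nonneg Y t y
  have hG0 : 0 ≤ G := by
    rw [hGdef]; exact Finset.sum_nonneg fun z _ => d1Norm_nonneg _ _ _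
  have hNB0 : 0 ≤ NB := hNBdef ▸ Real.sqrt_nonneg _
  -- generator sum bounds
  have hGenle : ∀ z : Fin 7, d1Norm (Gen z Y) t y ≤ G := by
    intro z; rw [hGdef]
    exact Finset.single_le_sum (f := fun z => d1Norm (Gen z Y) t y)
      (fun _ _ => d1Norm_nonneg _ _ _) (Finset.mem_univ z)
  have hScTG : d1Norm (ScT Y) t y ≤ G := hGenle 6
  have hOmG : ∀ k : Fin 3, d1Norm (OmT k Y) t y ≤ G := by
    intro k; fin_cases k
    · exact hGenle 3
    · exact hGenle 4
    · exact hGenle 5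
  -- pointwise bounds on atoms
  have hGsp : ∀ j, |fderiv ℝ (Sh (HY Y i)) (t,y) (ee j)| ≤ G := fun j => by
    rw [← Dsp_ScT Y hY i t y j]
    exact (dsp_le_d1Norm (ScT Y) t y j i).trans hScTG
  have hG0' : |fderiv ℝ (Sh (HY Y i)) (t,y) e0| ≤ G := by
    rw [← Dt_ScT Y hY i t y]
    exact (dt_le_d1Norm (ScT Y) t y i).trans hScTG
  have hP : ∀ (m : Fin 3) (j : Fin 3), |fderiv ℝ (HY Y m) (t,y) (ee j)| ≤ M := fun m j => by
    rw [← Dsp_Y Y hY m t y j, hMdef]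
    exact dsp_le_d1Norm Y t y j m
  have hOhB : ∀ (k j : Fin 3), |fderiv ℝ (Oh k (HY Y i)) (t,y) (ee j)| ≤ G + 3*M := by
    intro k j
    have h1 : fderiv ℝ (Oh k (HY Y i)) (t,y) (ee j)
        = Dsp j (fun s y => OmT k Y s y i) t y
          - ∑ m, Umat k i m * fderiv ℝ (HY Y m) (t,y) (ee j) := by
      rw [Dsp_OmT Y hY k i t y j]; ring
    rw [h1]
    have h2 : |∑ m, Umat k i m * fderiv ℝ (HY Y m) (t,y) (ee j)| ≤ 3*M := by
      have hb : ∀ m : Fin 3, |Umat k i m * fderiv ℝ (HY Y m) (t,y) (ee j)| ≤ M := fun m => by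
        rw [abs_mul]
        calc |Umat k i m| * |fderiv ℝ (HY Y m) (t,y) (ee j)| ≤ 1 * M :=
              mul_le_mul (umat_le k i m) (hP m j) (abs_nonneg _) zero_le_one
          _ = M := one_mul M
      rw [Fin.sum_univ_three]
      calc |Umat k i 0 * fderiv ℝ (HY Y 0) (t,y) (ee j)
            + Umat k i 1 * fderiv ℝ (HY Y 1) (t,y) (ee j)
            + Umat k i 2 * fderiv ℝ (HY Y 2) (t,y) (ee j)|
          ≤ |Umat k i 0 * fderiv ℝ (HY Y 0) (t,y) (ee j)
            + Umat k i 1 * fderiv ℝ (HY Y 1) (t,y) (ee j)|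
            + |Umat k i 2 * fderiv ℝ (HY Y 2) (t,y) (ee j)| := abs_add_le _ _
        _ ≤ 3*M := by
            have := abs_add_le (Umat k i 0 * fderiv ℝ (HY Y 0) (t,y) (ee j))
              (Umat k i 1 * fderiv ℝ (HY Y 1) (t,y) (ee j))
            linarith [hb 0, hb 1, hb 2]
    have h3 : |Dsp j (fun s y => OmT k Y s y i) t y| ≤ G :=
      (dsp_le_d1Norm (OmT k Y) t y j i).trans (hOmG k)
    calc |Dsp j (fun s y => OmT k Y s y i) t y
          - ∑ m, Umat k i m * fderiv ℝ (HY Y m) (t,y) (ee j)|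
        ≤ |Dsp j (fun s y => OmT k Y s y i) t y|
          + |∑ m, Umat k i m * fderiv ℝ (HY Y m) (t,y) (ee j)| := abs_sub _ _
      _ ≤ G + 3*M := add_le_add h3 h2
  have hB : |Box (fun s z => Y s z i) t y| ≤ NB := by
    rw [hNBdef]
    have h1 : (Box (fun s z => Y s z i) t y)^2
        ≤ ∑ i', (Box (fun s z => Y s z i') t y)^2 :=
      Finset.single_le_sum (f := fun i' => (Box (fun s z => Y s z i') t y)^2)
        (fun _ _ => sq_nonneg _) (Finset.mem_univ i)
    calc |Box (fun s z => Y s z i) t y|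
        = Real.sqrt ((Box (fun s z => Y s z i) t y)^2) := (Real.sqrt_sq_eq_abs _).symm
      _ ≤ _ := Real.sqrt_le_sqrt h1
  -- the value of L
  have hL : Dt (DrT fun s z => Y s z i) t y
      = ∑ j, (y j / ‖y‖) * fderiv ℝ (Dv (ee j) (HY Y i)) (t, y) e0 := by
    rw [show (fun s z => Y s z i) = cur (HY Y i) from rfl]
    exact Dt_DrT hcd t y
  obtain ⟨L, hLdef⟩ : ∃ L, L = Dt (DrT fun s z => Y s z i) t y := ⟨_, rfl⟩
  rw [← hLdef]
  have hrL : ‖y‖ * L = ∑ j, y j * fderiv ℝ (Dv (ee j) (HY Y i)) (t, y) e0 := by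
    rw [hLdef, hL, Finset.mul_sum]
    refine Finset.sum_congr rfl fun j _ => ?_
    field_simp
  -- the main identity
  have hsym : ∀ v w, fderiv ℝ (Dv v (HY Y i)) (t,y) w = fderiv ℝ (Dv w (HY Y i)) (t,y) v :=
    Dv_symm hcd (t,y)
  have hr2 : ‖y‖^2 = y 0^2 + y 1^2 + y 2^2 := by
    rw [norm_sq_eq, Fin.sum_univ_three]
  have hid : (t^2 - ‖y‖^2) * (‖y‖ * L)
      = t * (y 0 * fderiv ℝ (Sh (HY Y i)) (t,y) (ee 0)
           + y 1 * fderiv ℝ (Sh (HY Y i)) (t,y) (ee 1)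
           + y 2 * fderiv ℝ (Sh (HY Y i)) (t,y) (ee 2))
        - ‖y‖^2 * fderiv ℝ (Sh (HY Y i)) (t,y) e0
        + t * ‖y‖^2 * (Box (fun s z => Y s z i) t y)
        + 2*t*(y 0 * Dv (ee 0) (HY Y i) (t,y) + y 1 * Dv (ee 1) (HY Y i) (t,y)
             + y 2 * Dv (ee 2) (HY Y i) (t,y))
        + t * ( (y 1 * fderiv ℝ (Oh 0 (HY Y i)) (t,y) (ee 2)
                  - y 2 * fderiv ℝ (Oh 0 (HY Y i)) (t,y) (ee 1))
              + (y 2 * fderiv ℝ (Oh 1 (HY Y i)) (t,y) (ee 0)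
                  - y 0 * fderiv ℝ (Oh 1 (HY Y i)) (t,y) (ee 2))
              + (y 0 * fderiv ℝ (Oh 2 (HY Y i)) (t,y) (ee 1)
                  - y 1 * fderiv ℝ (Oh 2 (HY Y i)) (t,y) (ee 0)) ) := by
    rw [hrL, Fin.sum_univ_three]
    rw [show (fun s z => Y s z i) = cur (HY Y i) from rfl, Box_cur hcd t y]
    rw [fderiv_Sh hcd (t,y) e0, fderiv_Sh hcd (t,y) (ee 0), fderiv_Sh hcd (t,y) (ee 1),
      fderiv_Sh hcd (t,y) (ee 2)]
    rw [fderiv_Oh hcd 0 (t,y) (ee 2), fderiv_Oh hcd 0 (t,y) (ee 1),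
      fderiv_Oh hcd 1 (t,y) (ee 0), fderiv_Oh hcd 1 (t,y) (ee 2),
      fderiv_Oh hcd 2 (t,y) (ee 1), fderiv_Oh hcd 2 (t,y) (ee 0)]
    simp only [Fin.sum_univ_three,
      show ((0:Fin 3)+1 = 1) from rfl, show ((0:Fin 3)+2 = 2) from rfl,
      show ((1:Fin 3)+1 = 2) from rfl, show ((1:Fin 3)+2 = 0) from rfl,
      show ((2:Fin 3)+1 = 0) from rfl, show ((2:Fin 3)+2 = 1) from rfl]
    simp only [show ∀ v, fderiv ℝ (HY Y i) (t,y) v = Dv v (HY Y i) (t,y) from fun v => rfl]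
    simp only [hsym (ee 0) e0, hsym (ee 1) e0, hsym (ee 2) e0,
      hsym (ee 1) (ee 0), hsym (ee 2) (ee 0), hsym (ee 2) (ee 1)]
    simp only [show ∀ j : Fin 3, (ee j).1 = 0 from fun _ => rfl,
      show (e0.1 : ℝ) = 1 from rfl,
      show ∀ k : Fin 3, (e0.2 : Pt) k = 0 from fun _ => rfl,
      show ∀ j k : Fin 3, (ee j).2 k = if k = j then 1 else 0 from
        fun j k => EuclideanSpace.single_apply j 1 k]
    simp only [Fin.reduceAdd, Fin.reduceEq, reduceIte]
    norm_num
    rw [hr2]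
    ring
  -- term bounds
  have hT1 : |y 0 * fderiv ℝ (Sh (HY Y i)) (t,y) (ee 0)
      + y 1 * fderiv ℝ (Sh (HY Y i)) (t,y) (ee 1)
      + y 2 * fderiv ℝ (Sh (HY Y i)) (t,y) (ee 2)| ≤ 3 * (‖y‖ * G) :=
    wsum_bound y (fun j => fderiv ℝ (Sh (HY Y i)) (t,y) (ee j)) G hGsp
  have hT4 : |y 0 * Dv (ee 0) (HY Y i) (t,y) + y 1 * Dv (ee 1) (HY Y i) (t,y)
      + y 2 * Dv (ee 2) (HY Y i) (t,y)| ≤ 3 * (‖y‖ * M) :=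
    wsum_bound y (fun j => Dv (ee j) (HY Y i) (t,y)) M (fun j => hP i j)
  have hW : ∀ (k ja jb : Fin 3),
      |y ja * fderiv ℝ (Oh k (HY Y i)) (t,y) (ee jb)
        - y jb * fderiv ℝ (Oh k (HY Y i)) (t,y) (ee ja)| ≤ 2*(‖y‖*(G+3*M)) := by
    intro k ja jb
    have h1 : |y ja * fderiv ℝ (Oh k (HY Y i)) (t,y) (ee jb)| ≤ ‖y‖*(G+3*M) := by
      rw [abs_mul]
      exact mul_le_mul (coord_le y ja) (hOhB k jb) (abs_nonneg _) (norm_nonneg _)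
    have h2 : |y jb * fderiv ℝ (Oh k (HY Y i)) (t,y) (ee ja)| ≤ ‖y‖*(G+3*M) := by
      rw [abs_mul]
      exact mul_le_mul (coord_le y jb) (hOhB k ja) (abs_nonneg _) (norm_nonneg _)
    calc |y ja * fderiv ℝ (Oh k (HY Y i)) (t,y) (ee jb)
          - y jb * fderiv ℝ (Oh k (HY Y i)) (t,y) (ee ja)|
        ≤ |y ja * fderiv ℝ (Oh k (HY Y i)) (t,y) (ee jb)|
          + |y jb * fderiv ℝ (Oh k (HY Y i)) (t,y) (ee ja)| := abs_sub _ _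
      _ ≤ 2*(‖y‖*(G+3*M)) := by linarith
  have hW5 : |(y 1 * fderiv ℝ (Oh 0 (HY Y i)) (t,y) (ee 2)
          - y 2 * fderiv ℝ (Oh 0 (HY Y i)) (t,y) (ee 1))
        + (y 2 * fderiv ℝ (Oh 1 (HY Y i)) (t,y) (ee 0)
          - y 0 * fderiv ℝ (Oh 1 (HY Y i)) (t,y) (ee 2))
        + (y 0 * fderiv ℝ (Oh 2 (HY Y i)) (t,y) (ee 1)
          - y 1 * fderiv ℝ (Oh 2 (HY Y i)) (t,y) (ee 0))| ≤ 3*(2*(‖y‖*(G+3*M))) := by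
    have t1 := hW 0 1 2
    have t2 := hW 1 2 0
    have t3 := hW 2 0 1
    set w1 := y 1 * fderiv ℝ (Oh 0 (HY Y i)) (t,y) (ee 2)
      - y 2 * fderiv ℝ (Oh 0 (HY Y i)) (t,y) (ee 1) with hw1
    set w2 := y 2 * fderiv ℝ (Oh 1 (HY Y i)) (t,y) (ee 0)
      - y 0 * fderiv ℝ (Oh 1 (HY Y i)) (t,y) (ee 2) with hw2
    set w3 := y 0 * fderiv ℝ (Oh 2 (HY Y i)) (t,y) (ee 1)
      - y 1 * fderiv ℝ (Oh 2 (HY Y i)) (t,y) (ee 0) with hw3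
    calc |w1 + w2 + w3| ≤ |w1 + w2| + |w3| := abs_add_le _ _
      _ ≤ |w1| + |w2| + |w3| := by linarith [abs_add_le w1 w2]
      _ ≤ 3*(2*(‖y‖*(G+3*M))) := by linarith
  -- assemble
  have hEb : |(t^2 - ‖y‖^2) * (‖y‖ * L)| ≤ (‖y‖*(t+‖y‖)) * (10*G + 24*M + t*NB) := by
    rw [hid]
    refine assemble ‖y‖ t G M NB _ _ _ _ _ ht hr hG0 hM0 hNB0 ?_ ?_ ?_ ?_ ?_
    · rw [abs_mul, abs_of_nonneg ht]
      exact mul_le_mul_of_nonneg_left hT1 ht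
    · rw [abs_mul, abs_of_nonneg (sq_nonneg ‖y‖)]
      exact mul_le_mul_of_nonneg_left hG0' (sq_nonneg _)
    · rw [abs_mul, abs_of_nonneg (mul_nonneg ht (sq_nonneg ‖y‖))]
      exact mul_le_mul_of_nonneg_left hB (mul_nonneg ht (sq_nonneg _))
    · rw [abs_mul, abs_of_nonneg (by linarith : (0:ℝ) ≤ 2*t)]
      exact mul_le_mul_of_nonneg_left hT4 (by linarith)
    · rw [abs_mul, abs_of_nonneg ht]
      exact mul_le_mul_of_nonneg_left hW5 ht
  -- conclude
  have hpos : 0 < ‖y‖ * (t + ‖y‖) := mul_pos hr (by linarith)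
  have heq : |t - ‖y‖| * |L| * (‖y‖ * (t + ‖y‖)) = |(t^2 - ‖y‖^2) * (‖y‖ * L)| := by
    rw [abs_mul, show |t^2 - ‖y‖^2| = |t - ‖y‖| * (t + ‖y‖) from by
        rw [show t^2 - ‖y‖^2 = (t - ‖y‖)*(t+‖y‖) from by ring, abs_mul,
          abs_of_pos (show (0:ℝ) < t+‖y‖ from by linarith)],
      show |‖y‖ * L| = ‖y‖ * |L| from by rw [abs_mul, abs_of_pos hr]]
    ring
  have hfin : |t - ‖y‖| * |L| * (‖y‖ * (t + ‖y‖))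
      ≤ (10*G + 24*M + t*NB) * (‖y‖ * (t + ‖y‖)) := by
    rw [heq]
    calc |(t^2 - ‖y‖^2) * (‖y‖ * L)| ≤ (‖y‖*(t+‖y‖)) * (10*G + 24*M + t*NB) := hEb
      _ = (10*G + 24*M + t*NB) * (‖y‖ * (t + ‖y‖)) := by ring
  exact le_of_mul_le_mul_right hfin hpos

theorem weighted_dtdr_estimate :
    ∃ C : ℝ, 0 < C ∧
      ∀ Y : STV,
        (∀ i, ContDiff ℝ (⊤ : ℕ∞) fun q : ℝ × Pt => Y q.1 q.2 i) →
        ∀ (t : ℝ) (y : Pt), 0 ≤ t → 0 < ‖y‖ →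
          |t - ‖y‖| * Real.sqrt (∑ i, (Dt (DrT (fun s z => Y s z i)) t y)^2) ≤
            C * (d1Norm Y t y + (∑ z : Fin 7, d1Norm (Gen z Y) t y)
                + t * Real.sqrt (∑ i, (Box (fun s z => Y s z i) t y)^2)) := by
  refine ⟨100, by norm_num, ?_⟩
  intro Y hY t y ht hr
  have hk := fun i => key Y hY t y ht hr i
  have hs := sqrt_sum3 (fun i => Dt (DrT fun s z => Y s z i) t y)
  have hG0 : 0 ≤ ∑ z : Fin 7, d1Norm (Gen z Y) t y :=
    Finset.sum_nonneg fun z _ => d1Norm_nonneg _ _ _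
  have hM0 := d1Norm_nonneg Y t y
  have hNB0 : 0 ≤ Real.sqrt (∑ i, (Box (fun s z => Y s z i) t y)^2) := Real.sqrt_nonneg _
  have h1 : |t - ‖y‖| * Real.sqrt (∑ i, (Dt (DrT fun s z => Y s z i) t y)^2)
      ≤ |t - ‖y‖| * (|Dt (DrT fun s z => Y s z 0) t y| + |Dt (DrT fun s z => Y s z 1) t y|
          + |Dt (DrT fun s z => Y s z 2) t y|) :=
    mul_le_mul_of_nonneg_left hs (abs_nonneg _)
  have h2 : |t - ‖y‖| * (|Dt (DrT fun s z => Y s z 0) t y| + |Dt (DrT fun s z => Y s z 1) t y|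
          + |Dt (DrT fun s z => Y s z 2) t y|)
      = |t - ‖y‖| * |Dt (DrT fun s z => Y s z 0) t y|
        + |t - ‖y‖| * |Dt (DrT fun s z => Y s z 1) t y|
        + |t - ‖y‖| * |Dt (DrT fun s z => Y s z 2) t y| := by ring
  have htNB : 0 ≤ t * Real.sqrt (∑ i, (Box (fun s z => Y s z i) t y)^2) :=
    mul_nonneg ht hNB0
  linarith [hk 0, hk 1, hk 2]

end Stmt15
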